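/- Let (C, R, 𝓡) be a big-step semantics, 𝓡^? its partial-evaluation semantics and ⇝ the one-step reduction relation on finite proof trees in 𝓡^?. Then ⊢_𝓡 c ⇒ r holds if and only if the single-node tree with root c ⇒ ? reduces in finitely many ⇝-steps to a tree τ whose root is c ⇒ r. -/

import Mathlib

namespace BigStepMeta

universe u

/-- A judgment `c ⇒ r`: a configuration together with a result. -/
structure Judg (C : Type u) where
  conf : C
  res  : C

/-- A big-step rule: a conclusion configuration plus a nonempty finite list of premises.
The last premise is the continuation; the conclusion judgment is `concl ⇒ (last premise).res`. -/
structure Rule (C : Type u) where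
  concl : C
  premises : List (Judg C)
  ne : premises ≠ []

/-- The last premise (continuation) of a rule. -/
def Rule.lastJ {C : Type u} (ρ : Rule C) : Judg C := ρ.premises.getLast ρ.ne

/-- A big-step semantics `(C, R, 𝓡)`: configurations `C`, results `R ⊆ C`, rules `𝓡`. -/
structure BigStep (C : Type u) where
  R : Set C
  Rules : Set (Rule C)
  concl_not_res : ∀ ρ ∈ Rules, ρ.concl ∉ R
  prem_res : ∀ ρ ∈ Rules, ∀ j ∈ ρ.premises, j.res ∈ R

variable {C : Type u}

/-- Condition BP: the number of premises of rules is bounded. -/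
def BigStep.BP (S : BigStep C) : Prop :=
  ∃ b : ℕ, ∀ ρ ∈ S.Rules, ρ.premises.length ≤ b

/-- Inductive derivability `⊢_𝓡 c ⇒ r`: there is a finite proof tree.
For each result `r ∈ R` there is an implicit axiom `r ⇒ r`. -/
inductive Derives (S : BigStep C) : C → C → Prop
  | ax {r : C} : r ∈ S.R → Derives S r r
  | rule {ρ : Rule C} : ρ ∈ S.Rules →
      (∀ j ∈ ρ.premises, Derives S j.conf j.res) →
      Derives S ρ.concl ρ.lastJ.res

/-! ## Traces -/

/-- A finite or infinite trace of configurations. -/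
inductive Trace (C : Type u) where
  | fin : List C → Trace C
  | inf : (ℕ → C) → Trace C

/-- Concatenation of a finite list with an infinite sequence. -/
def appendInf (l : List C) (f : ℕ → C) : ℕ → C :=
  fun n => if h : n < l.length then l.get ⟨n, h⟩ else f (n - l.length)

/-- The finite trace `t_k · R(j_k)` associated to a premise and a chosen finite trace. -/
def finPart (p : Judg C × List C) : List C := p.2 ++ [p.1.res]

/-- The rule instances of the trace semantics `𝓡^tr`: a conclusion `c ⇒ t`
together with its list of premises. -/
inductive TrRule (S : BigStep C) : C → Trace C → List (C × Trace C) → Prop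
  | ax {r : C} : r ∈ S.R → TrRule S r (.fin [r]) []
  | intro {ρ : Rule C} {ts : List (List C)} :
      ρ ∈ S.Rules → ts.length = ρ.premises.length →
      TrRule S ρ.concl
        (.fin (ρ.concl :: ((ρ.premises.zip ts).map finPart).flatten))
        ((ρ.premises.zip ts).map (fun p => (p.1.conf, Trace.fin (finPart p))))
  | div {ρ : Rule C} {pre rest : List (Judg C)} {j : Judg C} {ts : List (List C)} {f : ℕ → C} :
      ρ ∈ S.Rules → ρ.premises = pre ++ j :: rest →
      ts.length = pre.length →
      TrRule S ρ.concl
        (.inf (appendInf (ρ.concl :: ((pre.zip ts).map finPart).flatten) f))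
        (((pre.zip ts).map (fun p => (p.1.conf, Trace.fin (finPart p)))) ++
          [(j.conf, Trace.inf f)])

/-- `⊢_{𝓡^tr} c ⇒ t` by a finite derivation (inductive interpretation of `𝓡^tr`). -/
inductive TrDerivesFin (S : BigStep C) : C → Trace C → Prop
  | step {c : C} {t : Trace C} {prems : List (C × Trace C)} :
      TrRule S c t prems →
      (∀ p ∈ prems, TrDerivesFin S p.1 p.2) →
      TrDerivesFin S c t

/-- `⊢_{𝓡^tr} c ⇒ t`: coinductive interpretation of `𝓡^tr`, i.e. existence of a possibly
infinite proof tree, expressed as membership in some backward-closed (consistent) relation. -/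
def TrDerives (S : BigStep C) (c : C) (t : Trace C) : Prop :=
  ∃ X : C → Trace C → Prop,
    (∀ c' t', X c' t' → ∃ prems, TrRule S c' t' prems ∧ ∀ p ∈ prems, X p.1 p.2) ∧
    X c t

/-! ## Wrong -/

/-- There is a rule with conclusion configuration `c`, first premises `pre`, whose next
premise has configuration `c'` and result `r` (i.e. a rule `ρ' ∼ᵢ ρ` with `R(ρ', i) = r`). -/
def HasContinuation (S : BigStep C) (c : C) (pre : List (Judg C)) (c' r : C) : Prop :=
  ∃ ρ' ∈ S.Rules, ∃ j' : Judg C, ∃ rest' : List (Judg C),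
    ρ'.premises = pre ++ j' :: rest' ∧ ρ'.concl = c ∧ j'.conf = c' ∧ j'.res = r

/-- Derivability in the wrong semantics `𝓡^wr`; `none` plays the role of `wrong`. -/
inductive DerivesW (S : BigStep C) : C → Option C → Prop
  | ax {r : C} : r ∈ S.R → DerivesW S r (some r)
  | rule {ρ : Rule C} : ρ ∈ S.Rules →
      (∀ j ∈ ρ.premises, DerivesW S j.conf (some j.res)) →
      DerivesW S ρ.concl (some ρ.lastJ.res)
  | wrong_intro {ρ : Rule C} {pre rest : List (Judg C)} {j : Judg C} {r : C} :
      ρ ∈ S.Rules → ρ.premises = pre ++ j :: rest → r ∈ S.R →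
      ¬ HasContinuation S ρ.concl pre j.conf r →
      (∀ j' ∈ pre, DerivesW S j'.conf (some j'.res)) →
      DerivesW S j.conf (some r) →
      DerivesW S ρ.concl none
  | wrong_ax {c : C} : c ∉ S.R → (¬ ∃ ρ ∈ S.Rules, ρ.concl = c) →
      DerivesW S c none
  | wrong_prop {ρ : Rule C} {pre rest : List (Judg C)} {j : Judg C} :
      ρ ∈ S.Rules → ρ.premises = pre ++ j :: rest →
      (∀ j' ∈ pre, DerivesW S j'.conf (some j'.res)) →
      DerivesW S j.conf none →
      DerivesW S ρ.concl none

/-! ## Indexed predicates and soundness conditions -/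

variable {I : Type u}

/-- `c ∈ Π`, i.e. `c ∈ Π_ι` for some index `ι`. -/
def InPred (P : I → Set C) (c : C) : Prop := ∃ i : I, c ∈ P i

/-- Condition S1 (local preservation). -/
def LocalPres (S : BigStep C) (P : I → Set C) : Prop :=
  ∀ ρ ∈ S.Rules, ∀ i : I, ρ.concl ∈ P i →
    ∃ f : ℕ → I, f (ρ.premises.length - 1) = i ∧
      ∀ (k : ℕ) (hk : k < ρ.premises.length),
        (∀ (h : ℕ) (hh : h < k), (ρ.premises.get ⟨h, hh.trans hk⟩).res ∈ P (f h)) →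
        (ρ.premises.get ⟨k, hk⟩).conf ∈ P (f k)

/-- Condition S2 (∃-progress). -/
def ExProgress (S : BigStep C) (P : I → Set C) : Prop :=
  ∀ c : C, InPred P c → c ∉ S.R → ∃ ρ ∈ S.Rules, ρ.concl = c

/-- Condition S3 (∀-progress). -/
def AllProgress (S : BigStep C) (P : I → Set C) : Prop :=
  ∀ ρ ∈ S.Rules, InPred P ρ.concl →
    ∀ (pre : List (Judg C)) (j : Judg C) (rest : List (Judg C)),
      ρ.premises = pre ++ j :: rest →
      (∀ j' ∈ pre, Derives S j'.conf j'.res) →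
      ∀ r ∈ S.R, Derives S j.conf r →
      HasContinuation S ρ.concl pre j.conf r

/-- Condition S4 (progress-may). -/
def ProgressMay (S : BigStep C) (P : I → Set C) : Prop :=
  ∀ c : C, InPred P c → c ∉ S.R →
    ∃ ρ ∈ S.Rules, ρ.concl = c ∧
      ∀ (pre : List (Judg C)) (j : Judg C) (rest : List (Judg C)),
        ρ.premises = pre ++ j :: rest →
        (∀ j' ∈ pre, Derives S j'.conf j'.res) →
        ¬ Derives S j.conf j.res →
        ¬ ∃ r : C, Derives S j.conf r

/-! ## Partial evaluation: the inference system `𝓡^?` -/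

/-- The rule instances of the partial-evaluation semantics `𝓡^?`; `none` plays the role
of the unknown result `?`. -/
inductive URule (S : BigStep C) : C → Option C → List (C × Option C) → Prop
  | ax {r : C} : r ∈ S.R → URule S r (some r) []
  | rule {ρ : Rule C} : ρ ∈ S.Rules →
      URule S ρ.concl (some ρ.lastJ.res) (ρ.premises.map (fun j => (j.conf, some j.res)))
  | unk_ax {c : C} : URule S c none []
  | unk {ρ : Rule C} {pre rest : List (Judg C)} {j : Judg C} {r : C} :
      ρ ∈ S.Rules → ρ.premises = pre ++ j :: rest → r ∈ S.R →
      URule S ρ.concl none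
        (pre.map (fun j' => (j'.conf, some j'.res)) ++ [(j.conf, some r)])
  | prop {ρ : Rule C} {pre rest : List (Judg C)} {j : Judg C} :
      ρ ∈ S.Rules → ρ.premises = pre ++ j :: rest →
      URule S ρ.concl none
        (pre.map (fun j' => (j'.conf, some j'.res)) ++ [(j.conf, none)])

/-! ## Possibly infinite trees as partial functions -/

/-- A (possibly infinite) tree labelled by judgments `c ⇒ u`, `u ∈ R ∪ {?}`, given as a
partial function on addresses (lists of positive naturals), with nonempty domain closed
under parents and left siblings. -/
structure PTree (C : Type u) where
  label : List ℕ+ → Option (C × Option C)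
  root_def : label [] ≠ none
  closed : ∀ (α : List ℕ+) (n : ℕ+), label (α ++ [n]) ≠ none → label α ≠ none
  siblings : ∀ (α : List ℕ+) (n k : ℕ+), k ≤ n →
    label (α ++ [n]) ≠ none → label (α ++ [k]) ≠ none

/-- `τ` is a proof tree in `𝓡^?`: at each node, the children are exactly the premises
of a rule of `𝓡^?` with the node's judgment as conclusion. -/
def PTree.IsProofTree (S : BigStep C) (τ : PTree C) : Prop :=
  ∀ (α : List ℕ+) (p : C × Option C), τ.label α = some p →
    ∃ prems : List (C × Option C), URule S p.1 p.2 prems ∧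
      ∀ n : ℕ+, τ.label (α ++ [n]) = prems[(n : ℕ) - 1]?

/-- The order `τ ⊑ τ'` on trees: larger domain, same configurations, and equal subtrees
at nodes whose result is already known (in `R`). -/
def PTree.LE (τ τ' : PTree C) : Prop :=
  ∀ (α : List ℕ+) (p : C × Option C), τ.label α = some p →
    ∃ p' : C × Option C, τ'.label α = some p' ∧ p.1 = p'.1 ∧
      (p.2 ≠ none → ∀ β : List ℕ+, τ.label (α ++ β) = τ'.label (α ++ β))

/-- A tree is finite if its domain is finite. -/
def PTree.Finite (τ : PTree C) : Prop := {α : List ℕ+ | τ.label α ≠ none}.Finite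

/-- A (typically infinite) proof tree is well-formed if at every level there is a node
labelled by an incomplete judgment, and subtrees rooted at complete judgments are finite. -/
def PTree.WellFormed (τ : PTree C) : Prop :=
  (∀ n : ℕ, ∃ (α : List ℕ+) (c : C), α.length = n ∧ τ.label α = some (c, none)) ∧
  (∀ (α : List ℕ+) (c r : C), τ.label α = some (c, some r) →
    {β : List ℕ+ | τ.label (α ++ β) ≠ none}.Finite)

/-! ## Finite proof trees and the reduction relation -/

/-- Finite trees labelled by judgments `c ⇒ u`, `u ∈ R ∪ {?}` (with `none` playing `?`). -/
inductive FTree (C : Type u) where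
  | node : C → Option C → List (FTree C) → FTree C

/-- The judgment at the root of a finite tree. -/
def FTree.judg : FTree C → C × Option C
  | .node c u _ => (c, u)

/-- `τ` is a finite proof tree in the partial-evaluation semantics `𝓡^?`. -/
inductive IsFPT (S : BigStep C) : FTree C → Prop
  | mk {c : C} {u : Option C} {l : List (FTree C)} :
      URule S c u (l.map FTree.judg) →
      (∀ τ ∈ l, IsFPT S τ) →
      IsFPT S (.node c u l)

/-- A finite proof tree is complete if all its judgments have results in `R`. -/
inductive FTree.Complete (S : BigStep C) : FTree C → Prop
  | mk {c : C} {r : C} {l : List (FTree C)} :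
      r ∈ S.R →
      (∀ τ ∈ l, FTree.Complete S τ) →
      FTree.Complete S (.node c (some r) l)

/-- The order `τ ⊑ τ'` on finite trees. -/
inductive FTreeLE : FTree C → FTree C → Prop
  | done {c r : C} {l : List (FTree C)} :
      FTreeLE (.node c (some r) l) (.node c (some r) l)
  | step {c : C} {u' : Option C} {l l₁ l₂ : List (FTree C)} :
      l.length = l₁.length →
      (∀ p ∈ l.zip l₁, FTreeLE p.1 p.2) →
      FTreeLE (.node c none l) (.node c u' (l₁ ++ l₂))

/-- The one-step reduction relation `⇝` on finite proof trees in `𝓡^?`. -/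
inductive Red (S : BigStep C) : FTree C → FTree C → Prop
  /-- The axiom `r ⇒ ?` (with `r ∈ R`) steps to the axiom `r ⇒ r`. -/
  | res {r : C} : r ∈ S.R → Red S (.node r none []) (.node r (some r) [])
  /-- The axiom `c ⇒ ?` steps, for a rule `ρ` with conclusion configuration `c`,
  to the tree applying `prop(ρ,1,?)` to the leaf `c' ⇒ ?`, `c'` the first premise
  configuration of `ρ`. -/
  | start {ρ : Rule C} {j : Judg C} {rest : List (Judg C)} :
      ρ ∈ S.Rules → ρ.premises = j :: rest →
      Red S (.node ρ.concl none []) (.node ρ.concl none [.node j.conf none []])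
  /-- A tree with root `c ⇒ ?` whose children are the first `i` premises of some
  `ρ' ∈ 𝓡` (with `#ρ' = i`, last premise result `r`) steps to the same tree with
  root `c ⇒ r`. -/
  | complete {ρ' : Rule C} {pre : List (Judg C)} {j' : Judg C} {l : List (FTree C)} :
      ρ' ∈ S.Rules → ρ'.premises = pre ++ [j'] →
      l.map FTree.judg = pre.map (fun j => (j.conf, some j.res)) ++ [(j'.conf, some j'.res)] →
      Red S (.node ρ'.concl none l) (.node ρ'.concl (some j'.res) l)
  /-- A tree with root `c ⇒ ?` whose children are the first `i` premises of some
  `ρ' ∈ 𝓡` having an `(i+1)`-th premise steps by adding the leaf for that premise's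
  configuration. -/
  | next {ρ' : Rule C} {pre rest : List (Judg C)} {j' j'' : Judg C} {l : List (FTree C)} :
      ρ' ∈ S.Rules → ρ'.premises = pre ++ j' :: j'' :: rest →
      l.map FTree.judg = pre.map (fun j => (j.conf, some j.res)) ++ [(j'.conf, some j'.res)] →
      Red S (.node ρ'.concl none l) (.node ρ'.concl none (l ++ [.node j''.conf none []]))
  /-- Propagation: a step of the last child is propagated. -/
  | inner {c : C} {l : List (FTree C)} {τ τ' : FTree C} :
      Red S τ τ' →
      Red S (.node c none (l ++ [τ])) (.node c none (l ++ [τ']))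


/-! ### Auxiliary lemmas for Statement 16 -/

section Aux16

variable {S : BigStep C}

lemma lastJ_of_eq {ρ : Rule C} {pre : List (Judg C)} {j : Judg C}
    (h : ρ.premises = pre ++ [j]) : ρ.lastJ = j := by
  have : ρ.premises.getLast ρ.ne = j := by
    have hgl := List.getLast_congr (l₂ := pre ++ [j]) ρ.ne (by simp) h
    rw [hgl]
    simp [List.getLast_append]
  simpa [Rule.lastJ] using this

lemma lift_inner {c : C} {l : List (FTree C)} {σ σ' : FTree C}
    (h : Relation.ReflTransGen (Red S) σ σ') :
    Relation.ReflTransGen (Red S) (.node c none (l ++ [σ])) (.node c none (l ++ [σ'])) := by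
  induction h with
  | refl => exact .refl
  | tail _ hstep ih => exact ih.tail (Red.inner hstep)

lemma buildB {ρ : Rule C} (hρ : ρ ∈ S.Rules)
    (hIH : ∀ j' ∈ ρ.premises, ∃ τ : FTree C,
      Relation.ReflTransGen (Red S) (.node j'.conf none []) τ ∧
        τ.judg = (j'.conf, some j'.res)) :
    ∀ (rest pre : List (Judg C)) (j : Judg C) (l : List (FTree C)),
    ρ.premises = pre ++ j :: rest →
    l.map FTree.judg = pre.map (fun j => (j.conf, some j.res)) →
    ∃ τ : FTree C,
      Relation.ReflTransGen (Red S) (.node ρ.concl none (l ++ [.node j.conf none []])) τ ∧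
        τ.judg = (ρ.concl, some ρ.lastJ.res) := by
  intro rest
  induction rest with
  | nil =>
    intro pre j l hprem hl
    obtain ⟨τj, hred, hjudg⟩ := hIH j (by rw [hprem]; simp)
    refine ⟨.node ρ.concl (some j.res) (l ++ [τj]), (lift_inner hred).tail ?_, ?_⟩
    · exact Red.complete hρ hprem (by simp [hl, hjudg])
    · have := lastJ_of_eq hprem
      simp [FTree.judg, this]
  | cons j'' rest' ih =>
    intro pre j l hprem hl
    obtain ⟨τj, hred, hjudg⟩ := hIH j (by rw [hprem]; simp)
    have hstep : Red S (.node ρ.concl none (l ++ [τj]))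
        (.node ρ.concl none ((l ++ [τj]) ++ [.node j''.conf none []])) :=
      Red.next hρ hprem (by simp [hl, hjudg])
    obtain ⟨τ, h3, h4⟩ := ih (pre ++ [j]) j'' (l ++ [τj]) (by simp [hprem]) (by simp [hl, hjudg])
    exact ⟨τ, ((lift_inner hred).tail hstep).trans h3, h4⟩

/-- Soundness invariant preserved by reduction. -/
inductive GoodT (S : BigStep C) : FTree C → Prop
  | mk {c : C} {u : Option C} {l : List (FTree C)} :
      (∀ τ ∈ l, GoodT S τ) → (∀ r : C, u = some r → Derives S c r) → GoodT S (.node c u l)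

lemma GoodT.red {τ τ' : FTree C} (h : Red S τ τ') (hτ : GoodT S τ) : GoodT S τ' := by
  induction h with
  | res hr =>
    exact GoodT.mk (by simp) (fun r' hr' => by cases hr'; exact Derives.ax hr)
  | start hρ hprem =>
    refine GoodT.mk ?_ (fun r' hr' => by cases hr')
    intro τ hτl
    simp only [List.mem_singleton] at hτl
    subst hτl
    exact GoodT.mk (by simp) (fun r' hr' => by cases hr')
  | @complete ρ' pre j' l hρ' hprem hl =>
    cases hτ with
    | mk hchild _ =>
      have hall : ∀ jj ∈ ρ'.premises, Derives S jj.conf jj.res := by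
        intro jj hjj
        have hmem : (jj.conf, some jj.res) ∈ l.map FTree.judg := by
          have hmap : l.map FTree.judg =
              ρ'.premises.map (fun j => (j.conf, some j.res)) := by
            rw [hl, hprem]; simp
          rw [hmap]
          exact List.mem_map_of_mem (f := fun j : Judg C => (j.conf, some j.res)) hjj
        obtain ⟨τ, hτl, hjudg⟩ := List.mem_map.mp hmem
        obtain ⟨c', u', l'⟩ := τ
        have g := hchild _ hτl
        cases g with
        | mk _ h2 =>
          simp only [FTree.judg, Prod.mk.injEq] at hjudg
          obtain ⟨hc', hu'⟩ := hjudg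
          have := h2 jj.res hu'
          rwa [hc'] at this
      have hd : Derives S ρ'.concl ρ'.lastJ.res := Derives.rule hρ' hall
      refine GoodT.mk hchild (fun r' hr' => ?_)
      cases hr'
      rwa [lastJ_of_eq hprem] at hd
  | next hρ' hprem hl =>
    cases hτ with
    | mk hchild _ =>
      refine GoodT.mk ?_ (fun r' hr' => by cases hr')
      intro τ hτl
      rcases List.mem_append.mp hτl with h | h
      · exact hchild _ h
      · simp only [List.mem_singleton] at h
        subst h
        exact GoodT.mk (by simp) (fun r' hr' => by cases hr')
  | @inner c' l τ τ' _ ih =>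
    cases hτ with
    | mk hchild _ =>
      refine GoodT.mk ?_ (fun r' hr' => by cases hr')
      intro σ hσ
      rcases List.mem_append.mp hσ with h | h
      · exact hchild _ (List.mem_append.mpr (Or.inl h))
      · simp only [List.mem_singleton] at h
        subst h
        exact ih (hchild _ (List.mem_append.mpr (Or.inr (by simp))))

lemma GoodT.redStar {τ τ' : FTree C} (h : Relation.ReflTransGen (Red S) τ τ')
    (hτ : GoodT S τ) : GoodT S τ' := by
  induction h with
  | refl => exact hτ
  | tail _ hstep ih => exact GoodT.red hstep ih

end Aux16

/-- Theorem `eq-finite_2`: `⊢_𝓡 c ⇒ r` iff the single-node tree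
with root `c ⇒ ?` reduces in finitely many `⇝`-steps to a tree whose root is `c ⇒ r`. -/
theorem statement16 {C : Type u} (S : BigStep C) (hBP : S.BP) (c r : C) :
    Derives S c r ↔
      ∃ τ : FTree C, Relation.ReflTransGen (Red S) (FTree.node c none []) τ ∧
        τ.judg = (c, some r) := by
  constructor
  · intro h
    induction h with
    | @ax r' hr =>
      exact ⟨.node r' (some r') [], Relation.ReflTransGen.single (Red.res hr), rfl⟩
    | @rule ρ hρ hprem ih =>
      obtain ⟨j, rest, hjr⟩ := List.exists_cons_of_ne_nil ρ.ne
      obtain ⟨τ, hred, hjudg⟩ := buildB hρ ih rest [] j []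
        (by simpa using hjr) (by simp)
      refine ⟨τ, Relation.ReflTransGen.trans ?_ hred, hjudg⟩
      exact Relation.ReflTransGen.single (by simpa using Red.start hρ hjr)
  · rintro ⟨τ, hred, hjudg⟩
    have hgood : GoodT S τ :=
      GoodT.redStar hred (GoodT.mk (by simp) (fun r' hr' => by cases hr'))
    obtain ⟨c', u', l'⟩ := τ
    simp only [FTree.judg, Prod.mk.injEq] at hjudg
    obtain ⟨hc', hu'⟩ := hjudg
    cases hgood with
    | mk _ h2 =>
      have := h2 r hu'
      rwa [hc'] at this

end BigStepMeta
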